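/- For a prime p ≥ 5, the number of equivalence classes up to rotation of Hamiltonian cycles on Z/p that have at least one axis of reflective symmetry equals ((p-1)/2) · 2^((p-3)/2) · ((p-3)/2)!. -/

import Mathlib

open Equiv
set_option linter.unusedSectionVars false

variable (p : ℕ) [NeZero p]

/-- `σ` is a (directed) Hamiltonian cycle on the `p` vertices `ZMod p`:
a single cycle whose support is everything. -/
def IsHC (σ : Perm (ZMod p)) : Prop := σ.IsCycle ∧ σ.support = Finset.univ

/-- The type of directed Hamiltonian cycles on `ZMod p`. -/
def HC := {σ : Perm (ZMod p) // IsHC p σ}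

/-- Rotation `k ↦ r + k`. -/
def rot (r : ZMod p) : Perm (ZMod p) := Equiv.addLeft r

/-- Reflection `k ↦ s - k`. -/
def reflAt (s : ZMod p) : Perm (ZMod p) := Equiv.subLeft s

/-- `g` fixes the *undirected* cycle underlying `σ` (conjugation can reverse orientation). -/
def FixedBy (g σ : Perm (ZMod p)) : Prop := g * σ * g⁻¹ = σ ∨ g * σ * g⁻¹ = σ⁻¹

lemma rot_zero : rot p 0 = 1 := by ext x; simp [rot]

lemma rot_neg (r : ZMod p) : rot p (-r) = (rot p r)⁻¹ := by
  ext x; simp [rot, neg_add_eq_sub, eq_sub_iff_add_eq]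

lemma rot_add (r s : ZMod p) : rot p (r + s) = rot p r * rot p s := by
  ext x; simp [rot, add_assoc]

/-- The action of a rotation on a cycle, by conjugation. -/
def rotAct (r : ZMod p) (σ : Perm (ZMod p)) : Perm (ZMod p) := rot p r * σ * (rot p r)⁻¹

lemma rotAct_zero (σ : Perm (ZMod p)) : rotAct p 0 σ = σ := by
  simp [rotAct, rot_zero]

lemma rotAct_inv (r : ZMod p) (σ : Perm (ZMod p)) :
    (rotAct p r σ)⁻¹ = rotAct p r σ⁻¹ := by
  simp [rotAct, mul_inv_rev, mul_assoc]

lemma rotAct_rotAct (r s : ZMod p) (σ : Perm (ZMod p)) :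
    rotAct p r (rotAct p s σ) = rotAct p (r + s) σ := by
  simp [rotAct, rot_add, mul_inv_rev, mul_assoc]

lemma rotAct_neg_cancel (r : ZMod p) (σ : Perm (ZMod p)) :
    rotAct p (-r) (rotAct p r σ) = σ := by
  rw [rotAct_rotAct, neg_add_cancel, rotAct_zero]

/-- Setoid identifying a directed cycle with its reversal: undirected cycles. -/
def revSetoid : Setoid (HC p) where
  r σ τ := τ.1 = σ.1 ∨ τ.1 = σ.1⁻¹
  iseqv := by
    constructor
    · exact fun a => Or.inl rfl
    · rintro a b (h | h)
      · exact Or.inl h.symm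
      · right; rw [h, inv_inv]
    · rintro a b c (h1 | h1) (h2 | h2) <;> rw [h2, h1] <;> simp
/-- Undirected Hamiltonian cycles. -/
def UCyc := Quotient (revSetoid p)

/-- Setoid identifying cycles up to rotation and reversal: the equivalence classes
of undirected cycles under rotation. -/
def rotSetoid : Setoid (HC p) where
  r σ τ := ∃ r : ZMod p, τ.1 = rotAct p r σ.1 ∨ τ.1 = (rotAct p r σ.1)⁻¹
  iseqv := by
    constructor
    · exact fun a => ⟨0, Or.inl (by rw [rotAct_zero])⟩
    · rintro a b ⟨r, h | h⟩ <;> refine ⟨-r, ?_⟩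
      · left; rw [h, rotAct_neg_cancel]
      · right; rw [h, rotAct_inv, inv_inv, rotAct_neg_cancel]
    · rintro a b c ⟨r, h1 | h1⟩ ⟨s, h2 | h2⟩ <;> refine ⟨s + r, ?_⟩ <;>
        rw [h2, h1] <;>
        simp [rotAct_inv, rotAct_rotAct]
/-- Rotation classes of undirected Hamiltonian cycles. -/
def RotClasses := Quotient (rotSetoid p)

section AuxA
variable {p}

lemma rot_apply (r x : ZMod p) : rot p r x = r + x := rfl
lemma reflAt_apply (s x : ZMod p) : reflAt p s x = s - x := rfl

lemma reflAt_mul_self (s : ZMod p) : reflAt p s * reflAt p s = 1 := by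
  ext x; simp [reflAt]

lemma reflAt_inv (s : ZMod p) : (reflAt p s)⁻¹ = reflAt p s :=
  inv_eq_of_mul_eq_one_left (reflAt_mul_self s)

lemma rotAct_apply (c : ZMod p) (σ : Perm (ZMod p)) (x : ZMod p) :
    rotAct p c σ x = c + σ (-c + x) := by
  rw [rotAct, ← rot_neg]
  simp [rot, Perm.mul_apply]

lemma perm_apply_inv_self {α : Type*} (f : Perm α) (x : α) : f (f⁻¹ x) = x :=
  f.apply_symm_apply x

lemma perm_inv_apply_self {α : Type*} (f : Perm α) (x : α) : f⁻¹ (f x) = x :=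
  f.symm_apply_apply x

lemma hc_apply_ne {σ : Perm (ZMod p)} (hσ : IsHC p σ) (x : ZMod p) : σ x ≠ x := by
  have : x ∈ σ.support := by rw [hσ.2]; exact Finset.mem_univ x
  exact Equiv.Perm.mem_support.mp this

lemma hc_orderOf {σ : Perm (ZMod p)} (hσ : IsHC p σ) : orderOf σ = p := by
  rw [hσ.1.orderOf, hσ.2, Finset.card_univ, ZMod.card]

lemma commute_hc_eq_zpow {σ τ : Perm (ZMod p)} (hσ : IsHC p σ) (h : Commute τ σ) :
    ∃ i : ℤ, τ = σ ^ i := by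
  obtain ⟨i, hi⟩ := hσ.1.sameCycle (hc_apply_ne hσ 0) (hc_apply_ne hσ (τ 0))
  refine ⟨i, ?_⟩
  ext x
  obtain ⟨j, hj⟩ := hσ.1.sameCycle (hc_apply_ne hσ 0) (hc_apply_ne hσ x)
  have hcj : σ ^ j * τ = τ * σ ^ j := (h.zpow_right j).symm.eq
  calc τ x = τ ((σ ^ j) 0) := by rw [hj]
    _ = (σ ^ j) (τ 0) := by
        have := congrArg (fun f : Perm (ZMod p) => f 0) hcj.symm
        simpa using this
    _ = (σ ^ j) ((σ ^ i) 0) := by rw [hi]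
    _ = (σ ^ i) ((σ ^ j) 0) := by
        have h2 : σ ^ j * σ ^ i = σ ^ i * σ ^ j := ((Commute.refl σ).zpow_zpow i j).symm.eq
        have := congrArg (fun f : Perm (ZMod p) => f 0) h2
        simpa using this
    _ = (σ ^ i) x := by rw [hj]

lemma hc_zpow_eq_one_iff {σ : Perm (ZMod p)} (hσ : IsHC p σ) {c : ℤ} :
    σ ^ c = 1 ↔ (p : ℤ) ∣ c := by
  rw [← orderOf_dvd_iff_zpow_eq_one, hc_orderOf hσ]

lemma hc_mem_zpowers [Fact p.Prime] {σ ρ : Perm (ZMod p)} (hσ : IsHC p σ) {c : ℤ}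
    (hρ : σ ^ c = ρ) (hne : ρ ≠ 1) : ∃ u : ℤ, ρ ^ u = σ := by
  have hpc : ¬ (p : ℤ) ∣ c := fun hd => hne (hρ ▸ (hc_zpow_eq_one_iff hσ).mpr hd)
  have hg : Int.gcd c p = 1 := by
    have h2 : Int.gcd c p ∣ p :=
      Int.ofNat_dvd.mp (by exact_mod_cast Int.gcd_dvd_right (a := c) (b := (p:ℤ)))
    rcases (Fact.out : p.Prime).eq_one_or_self_of_dvd _ h2 with h | h
    · exact h
    · exact absurd (h ▸ Int.gcd_dvd_left (a := c) (b := (p:ℤ))) hpc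
  obtain ⟨u, v, huv⟩ := Int.isCoprime_iff_gcd_eq_one.mpr hg
  refine ⟨u, ?_⟩
  calc ρ ^ u = σ ^ (c * u) := by rw [← hρ, ← zpow_mul]
    _ = σ ^ (u * c + v * p) * (σ ^ (p:ℤ)) ^ (-v) := by rw [← zpow_mul, ← zpow_add]; ring_nf
    _ = σ := by rw [(hc_zpow_eq_one_iff hσ).mpr dvd_rfl, huv, zpow_one, one_zpow, mul_one]

variable [Fact p.Prime]

lemma twoNeZero (hp : 5 ≤ p) : (2 : ZMod p) ≠ 0 := by
  intro h
  have h2 : ((2:ℕ) : ZMod p) = 0 := by exact_mod_cast h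
  have h3 := (ZMod.natCast_eq_zero_iff 2 p).mp h2
  have := Nat.le_of_dvd (by norm_num) h3
  omega

lemma exists_eq_rot_of_commute {σ : Perm (ZMod p)} (hσ : IsHC p σ) {d : ZMod p} (hd : d ≠ 0)
    (h : Commute (rot p d) σ) : ∃ e, σ = rot p e := by
  obtain ⟨i, hi⟩ := commute_hc_eq_zpow hσ h
  have hne : rot p d ≠ 1 := by
    intro h1
    have := congrArg (fun f : Perm (ZMod p) => f 0) h1
    simp [rot] at this
    exact hd this
  obtain ⟨u, hu⟩ := hc_mem_zpowers hσ hi.symm hne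
  refine ⟨(u : ZMod p) * d, ?_⟩
  rw [← hu]
  clear hu hi hne h hd hσ
  induction u using Int.induction_on with
  | zero => simp [rot_zero]
  | succ k ih => rw [zpow_add, zpow_one, ih, ← rot_add]; push_cast; ring_nf
  | pred k ih =>
      rw [sub_eq_add_neg, zpow_add, ih, zpow_neg, zpow_one, ← rot_neg, ← rot_add]
      push_cast; ring_nf

/-- sigma has the 0-axis symmetry -/
def Sym0 (σ : Perm (ZMod p)) : Prop := σ * reflAt p 0 * σ = reflAt p 0

lemma symAt_iff {σ : Perm (ZMod p)} {s : ZMod p} :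
    σ * reflAt p s * σ = reflAt p s ↔ ∀ x, σ (s - σ x) = s - x := by
  constructor
  · intro h x
    have := congrArg (fun f : Perm (ZMod p) => f x) h
    simpa [Perm.mul_apply, reflAt_apply] using this
  · intro h
    ext x
    simpa [Perm.mul_apply, reflAt_apply] using h x

lemma sym0_iff {σ : Perm (ZMod p)} : Sym0 σ ↔ ∀ x, σ (0 - σ x) = 0 - x := symAt_iff

lemma sym0_inv {σ : Perm (ZMod p)} (h : Sym0 σ) : Sym0 σ⁻¹ := by
  unfold Sym0 at *
  calc σ⁻¹ * reflAt p 0 * σ⁻¹ = σ⁻¹ * (σ * reflAt p 0 * σ) * σ⁻¹ := by rw [h]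
    _ = reflAt p 0 := by group

lemma sym0_fixedBy {σ : Perm (ZMod p)} (h : Sym0 σ) : FixedBy p (reflAt p 0) σ := by
  right
  rw [reflAt_inv]
  calc reflAt p 0 * σ * reflAt p 0
      = σ⁻¹ * (σ * reflAt p 0 * σ) * reflAt p 0 := by group
    _ = σ⁻¹ * reflAt p 0 * reflAt p 0 := by rw [h]
    _ = σ⁻¹ := by rw [mul_assoc, reflAt_mul_self, mul_one]

lemma rotAct_eq_self_of_sym0 (hp : 5 ≤ p) {σ : Perm (ZMod p)} (hσ : IsHC p σ)
    (h0 : Sym0 σ) {c : ZMod p} (hc : Sym0 (rotAct p c σ)) : rotAct p c σ = σ := by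
  have h0' := sym0_iff.mp h0
  have hc' := sym0_iff.mp hc
  have key : ∀ y, σ (-(c + c) - σ y) = -(c + c) - y := by
    intro y
    have h1 := hc' (c + y)
    rw [rotAct_apply, rotAct_apply] at h1
    have e1 : -c + (c + y) = y := by ring
    rw [e1] at h1
    have e2 : -c + (0 - (c + σ y)) = -(c+c) - σ y := by ring
    rw [e2] at h1
    linear_combination h1
  have comm2 : rot p (-(c+c)) * σ = σ * rot p (-(c+c)) := by
    ext v
    have h2 := key (σ⁻¹ (0 - v))
    have h3 := h0' (σ⁻¹ (0 - v))
    rw [perm_apply_inv_self] at h2 h3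
    have e1 : (0 : ZMod p) - (0 - v) = v := by ring
    rw [e1] at h3
    have e2 : -(c+c) - (0 - v) = -(c+c) + v := by ring
    rw [e2] at h2
    simp only [Perm.mul_apply, rot_apply]
    rw [h2]
    linear_combination h3
  by_cases hcc : c + c = 0
  · have hc0 : c = 0 := by
      have h4 : (2:ZMod p) * c = 0 := by linear_combination hcc
      rcases mul_eq_zero.mp h4 with h | h
      · exact absurd h (twoNeZero hp)
      · exact h
    rw [rotAct, hc0, rot_zero]
    simp
  · obtain ⟨e, he⟩ := exists_eq_rot_of_commute hσ (neg_ne_zero.mpr hcc) comm2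
    rw [rotAct, he, ← rot_neg, ← rot_add, ← rot_add]
    congr 1
    ring

lemma mem_pair_of_rel (hp : 5 ≤ p) {σ τ : Perm (ZMod p)} (hσ : IsHC p σ) (hσ0 : Sym0 σ)
    (hτ0 : Sym0 τ) {c : ZMod p} (h : τ = rotAct p c σ ∨ τ = (rotAct p c σ)⁻¹) :
    τ = σ ∨ τ = σ⁻¹ := by
  rcases h with h | h
  · left
    rw [h] at hτ0 ⊢
    rw [rotAct_eq_self_of_sym0 hp hσ hσ0 hτ0]
  · right
    rw [h] at hτ0 ⊢
    have h5 := sym0_inv hτ0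
    rw [inv_inv] at h5
    rw [rotAct_eq_self_of_sym0 hp hσ hσ0 h5]

lemma reflAt_ne_one (hp : 5 ≤ p) (s : ZMod p) : reflAt p s ≠ 1 := by
  intro h
  have h0 := congrArg (fun f : Perm (ZMod p) => f 0) h
  have h1 := congrArg (fun f : Perm (ZMod p) => f 1) h
  simp only [reflAt_apply, Perm.one_apply] at h0 h1
  exact twoNeZero hp (by linear_combination h0 - h1)

lemma fixedBy_reflAt (hp : 5 ≤ p) {σ : Perm (ZMod p)} (hσ : IsHC p σ) {s : ZMod p}
    (h : FixedBy p (reflAt p s) σ) : σ * reflAt p s * σ = reflAt p s := by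
  rcases h with h | h
  · exfalso
    rw [reflAt_inv] at h
    have hcomm : Commute (reflAt p s) σ := by
      have h2 : reflAt p s * σ * (reflAt p s * reflAt p s) = σ * reflAt p s := by
        rw [← mul_assoc, h]
      rwa [reflAt_mul_self, mul_one] at h2
    obtain ⟨i, hi⟩ := commute_hc_eq_zpow hσ hcomm
    have h2 : σ ^ (2 * i) = 1 := by
      rw [two_mul, zpow_add, ← hi, reflAt_mul_self]
    have hdvd := (hc_zpow_eq_one_iff hσ).mp h2
    have hP : Prime (p:ℤ) := Nat.prime_iff_prime_int.mp Fact.out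
    rcases hP.dvd_mul.mp hdvd with h3 | h3
    · have h4 : (p:ℤ) ≤ 2 := Int.le_of_dvd (by norm_num) h3
      have : p ≤ 2 := by exact_mod_cast h4
      omega
    · have h5 : σ ^ i = 1 := (hc_zpow_eq_one_iff hσ).mpr h3
      exact reflAt_ne_one hp s (hi.trans h5)
  · rw [reflAt_inv] at h
    have h2 : σ * (reflAt p s * σ * reflAt p s) = 1 := by
      rw [h, mul_inv_cancel]
    have h3 : σ * reflAt p s * σ * reflAt p s = 1 := by rw [← h2]; group
    have h4 := mul_eq_one_iff_eq_inv.mp h3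
    rwa [reflAt_inv] at h4

lemma sym0_rotAct_of_fixed (hp : 5 ≤ p) {σ : Perm (ZMod p)} {s : ZMod p}
    (h : σ * reflAt p s * σ = reflAt p s) :
    Sym0 (rotAct p (-(s * (2:ZMod p)⁻¹)) σ) := by
  set c := -(s * (2:ZMod p)⁻¹) with hcdef
  have hs : c + c = -s := by
    rw [hcdef, ← neg_add, ← two_mul, neg_eq_iff_eq_neg, neg_neg, mul_comm (2:ZMod p),
      mul_assoc, inv_mul_cancel₀ (twoNeZero hp), mul_one]
  have h' := symAt_iff.mp h
  rw [sym0_iff]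
  intro x
  rw [rotAct_apply, rotAct_apply]
  have e1 : -c + (0 - (c + σ (-c + x))) = s - σ (-c + x) := by linear_combination -hs
  rw [e1, h' (-c + x)]
  linear_combination hs

lemma isHC_rotAct {σ : Perm (ZMod p)} (hσ : IsHC p σ) (c : ZMod p) :
    IsHC p (rotAct p c σ) := by
  refine ⟨hσ.1.conj, ?_⟩
  rw [rotAct, Perm.support_conj, hσ.2]
  simp

lemma isHC_inv {σ : Perm (ZMod p)} (hσ : IsHC p σ) : IsHC p σ⁻¹ := by
  refine ⟨hσ.1.inv, ?_⟩
  rw [Perm.support_inv, hσ.2]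

lemma hc_ne_inv (hp : 5 ≤ p) {σ : Perm (ZMod p)} (hσ : IsHC p σ) : σ ≠ σ⁻¹ := by
  intro h
  have h2 : σ ^ 2 = 1 := by rw [pow_two]; nth_rewrite 2 [h]; rw [mul_inv_cancel]
  have := orderOf_dvd_of_pow_eq_one h2
  rw [hc_orderOf hσ] at this
  have := Nat.le_of_dvd (by norm_num) this
  omega


lemma rot_zpow (d : ZMod p) (u : ℤ) : (rot p d) ^ u = rot p ((u : ZMod p) * d) := by
  induction u using Int.induction_on with
  | zero => simp [rot_zero]
  | succ k ih => rw [zpow_add, zpow_one, ih, ← rot_add]; push_cast; ring_nf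
  | pred k ih =>
      rw [sub_eq_add_neg, zpow_add, ih, zpow_neg, zpow_one, ← rot_neg, ← rot_add]
      push_cast; ring_nf

lemma rot_one_isHC (hp : 5 ≤ p) : IsHC p (rot p 1) := by
  have h1 : (1 : ZMod p) ≠ 0 := by
    intro h
    exact twoNeZero hp (by linear_combination 2 * h)
  constructor
  · refine ⟨0, ?_, ?_⟩
    · simpa [rot_apply] using h1
    · intro y _
      refine ⟨(y.val : ℤ), ?_⟩
      rw [rot_zpow]
      simp only [rot_apply, mul_one, add_zero]
      push_cast
      exact ZMod.natCast_rightInverse y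
  · ext x
    simp only [Perm.mem_support, rot_apply, Finset.mem_univ, iff_true]
    intro h
    exact h1 (by linear_combination h)

lemma sym0_conj {σ : Perm (ZMod p)} (h : Sym0 σ) :
    reflAt p 0 * σ * reflAt p 0 = σ⁻¹ := by
  calc reflAt p 0 * σ * reflAt p 0
      = σ⁻¹ * (σ * reflAt p 0 * σ) * reflAt p 0 := by group
    _ = σ⁻¹ * reflAt p 0 * reflAt p 0 := by
        rw [show σ * reflAt p 0 * σ = reflAt p 0 from h]
    _ = σ⁻¹ := by rw [mul_assoc, reflAt_mul_self, mul_one]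

/-- odd permutations -/
def OddPerm : Type _ := {f : Perm (ZMod p) // ∀ x : ZMod p, f (-x) = -(f x)}


lemma odd_inv {f : Perm (ZMod p)} (hf : ∀ x : ZMod p, f (-x) = -(f x)) (x : ZMod p) :
    f⁻¹ (-x) = -(f⁻¹ x) := by
  apply f.injective
  rw [perm_apply_inv_self, hf, perm_apply_inv_self]

lemma odd_apply_zero {f : Perm (ZMod p)} (hp : 5 ≤ p)
    (hf : ∀ x : ZMod p, f (-x) = -(f x)) : f 0 = 0 := by
  have h := hf 0
  rw [neg_zero] at h
  have h2 : (2 : ZMod p) * f 0 = 0 := by linear_combination h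
  rcases mul_eq_zero.mp h2 with h3 | h3
  · exact absurd h3 (twoNeZero hp)
  · exact h3

lemma psi_mem (hp : 5 ≤ p) {f : Perm (ZMod p)} (hf : ∀ x : ZMod p, f (-x) = -(f x)) :
    IsHC p (f * rot p 1 * f⁻¹) ∧ Sym0 (f * rot p 1 * f⁻¹) := by
  refine ⟨⟨(rot_one_isHC hp).1.conj, ?_⟩, ?_⟩
  · rw [Perm.support_conj, (rot_one_isHC hp).2]
    simp
  · rw [sym0_iff]
    intro x
    have hfinv := odd_inv hf
    simp only [Perm.mul_apply, rot_apply, zero_sub]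
    rw [hfinv, perm_inv_apply_self]
    have e : (1:ZMod p) + -(1 + f⁻¹ x) = -(f⁻¹ x) := by ring
    rw [e, hf, perm_apply_inv_self]

lemma psi_injective (hp : 5 ≤ p) {f g : Perm (ZMod p)}
    (hf : ∀ x : ZMod p, f (-x) = -(f x)) (hg : ∀ x : ZMod p, g (-x) = -(g x))
    (h : f * rot p 1 * f⁻¹ = g * rot p 1 * g⁻¹) : f = g := by
  have hcomm : Commute (g⁻¹ * f) (rot p 1) := by
    unfold Commute SemiconjBy
    have h2 : g⁻¹ * (f * rot p 1 * f⁻¹) * g = g⁻¹ * (g * rot p 1 * g⁻¹) * g := by rw [h]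
    have h3 : g⁻¹ * (g * rot p 1 * g⁻¹) * g = rot p 1 := by group
    rw [h3] at h2
    calc g⁻¹ * f * rot p 1 = (g⁻¹ * (f * rot p 1 * f⁻¹) * g) * (g⁻¹ * f) := by group
      _ = rot p 1 * (g⁻¹ * f) := by rw [h2]
  obtain ⟨i, hi⟩ := commute_hc_eq_zpow (rot_one_isHC hp) hcomm
  rw [rot_zpow] at hi
  have hodd : (g⁻¹ * f) (-(0:ZMod p)) = -((g⁻¹ * f) (0 : ZMod p)) := by
    simp only [Perm.mul_apply]
    rw [hf, odd_inv hg]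
  rw [hi] at hodd
  simp only [rot_apply, neg_zero, add_zero, mul_one] at hodd
  have he : ((i : ZMod p)) = 0 := by
    have h2 : (2 : ZMod p) * (i : ZMod p) = 0 := by linear_combination hodd
    rcases mul_eq_zero.mp h2 with h3 | h3
    · exact absurd h3 (twoNeZero hp)
    · exact h3
  rw [he, zero_mul, rot_zero] at hi
  exact (inv_mul_eq_one.mp hi).symm


lemma hc_zpow_congr {σ : Perm (ZMod p)} (hσ : IsHC p σ) {a b : ℤ}
    (h : ((a : ℤ) : ZMod p) = ((b : ℤ) : ZMod p)) : σ ^ a = σ ^ b := by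
  have hd : (p:ℤ) ∣ a - b := by
    rw [← ZMod.intCast_zmod_eq_zero_iff_dvd]
    push_cast
    rw [sub_eq_zero]
    exact_mod_cast h
  have h1 : σ ^ (a - b) = 1 := (hc_zpow_eq_one_iff hσ).mpr hd
  rw [zpow_sub] at h1
  exact mul_inv_eq_one.mp h1

lemma hc_zpow_fix {σ : Perm (ZMod p)} (hσ : IsHC p σ) {c : ℤ}
    (h : (σ ^ c) 0 = 0) : σ ^ c = 1 := by
  by_contra hne
  obtain ⟨u, hu⟩ := hc_mem_zpowers hσ rfl hne
  have h0 : ((σ ^ c) ^ u) 0 = 0 := Function.IsFixedPt.perm_zpow h u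
  rw [hu] at h0
  exact hc_apply_ne hσ 0 h0

lemma psi_surjective (hp : 5 ≤ p) {σ : Perm (ZMod p)} (hσ : IsHC p σ) (hs : Sym0 σ) :
    ∃ f : Perm (ZMod p), (∀ x, f (-x) = -(f x)) ∧ f * rot p 1 * f⁻¹ = σ := by
  classical
  have hval : ∀ i : ZMod p, ((i.val : ℕ) : ZMod p) = i := fun i => ZMod.natCast_rightInverse i
  set f0 : ZMod p → ZMod p := fun i => (σ ^ (i.val : ℤ)) 0 with hf0
  have hinj : Function.Injective f0 := by
    intro i j hij
    have h1 : (σ ^ ((i.val : ℤ) - (j.val : ℤ))) 0 = 0 := by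
      have e1 : σ ^ ((i.val : ℤ) - (j.val : ℤ)) = σ ^ (-(j.val:ℤ)) * σ ^ (i.val:ℤ) := by
        rw [← zpow_add]; ring_nf
      rw [e1, Perm.mul_apply]
      show (σ ^ (-(j.val:ℤ))) (f0 i) = 0
      rw [hij]
      show (σ ^ (-(j.val:ℤ))) ((σ ^ (j.val:ℤ)) 0) = 0
      rw [zpow_neg, perm_inv_apply_self]
    have h2 := hc_zpow_fix hσ h1
    have hd := (hc_zpow_eq_one_iff hσ).mp h2
    have h3 : ((i.val:ℤ) : ZMod p) = ((j.val:ℤ) : ZMod p) := by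
      rw [← sub_eq_zero, ← Int.cast_sub, ZMod.intCast_zmod_eq_zero_iff_dvd]
      exact hd
    have h4 : ((i.val:ℕ) : ZMod p) = ((j.val:ℕ) : ZMod p) := by exact_mod_cast h3
    rwa [hval i, hval j] at h4
  have hbij := Finite.injective_iff_bijective.mp hinj
  refine ⟨Equiv.ofBijective f0 hbij, ?_, ?_⟩
  · intro x
    show f0 (-x) = -(f0 x)
    have h6 : (((-x).val : ℤ) : ZMod p) = ((-(x.val:ℤ) : ℤ) : ZMod p) := by
      push_cast
      rw [hval (-x), hval x]
    show (σ ^ (((-x).val : ℤ))) 0 = -((σ ^ ((x.val:ℤ))) 0)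
    rw [hc_zpow_congr hσ h6]
    -- σ^(-a) 0 = -(σ^a 0)
    have h5 : σ ^ (-(x.val:ℤ)) = reflAt p 0 * σ ^ ((x.val:ℤ)) * (reflAt p 0)⁻¹ := by
      rw [zpow_neg, ← inv_zpow, ← conj_zpow, reflAt_inv]
      rw [show reflAt p 0 * σ * reflAt p 0 = σ⁻¹ from sym0_conj hs]
    rw [h5]
    simp only [Perm.mul_apply, reflAt_inv, reflAt_apply, zero_sub, neg_zero]
  · rw [mul_inv_eq_iff_eq_mul]
    ext x
    simp only [Perm.mul_apply, rot_apply]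
    show f0 (1 + x) = σ (f0 x)
    have h7 : (((1+x).val : ℤ) : ZMod p) = ((1 + (x.val:ℤ) : ℤ) : ZMod p) := by
      push_cast
      rw [hval (1+x), hval x]
    show (σ ^ (((1+x).val : ℤ))) 0 = σ ((σ ^ ((x.val:ℤ))) 0)
    rw [hc_zpow_congr hσ h7, zpow_add, zpow_one, Perm.mul_apply]

end AuxA

section AuxD
variable {p m : ℕ} [NeZero p] [Fact p.Prime]

def flipo {m : ℕ} : Option (Fin m × Bool) → Option (Fin m × Bool) :=
  fun o => o.map (fun y => (y.1, !y.2))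

def notE : Perm Bool := ⟨Bool.not, Bool.not, Bool.not_not, Bool.not_not⟩

def shear {m : ℕ} (g : Perm (Fin m)) (ε : Fin m → Bool) : Perm (Fin m × Bool) :=
  Equiv.prodShear g (fun a => if ε a then notE else Equiv.refl Bool)

def EE (hm : p = 2 * m + 1) : ZMod p ≃ Option (Fin m × Bool) where
  toFun x := if _hx : x.val = 0 then none
    else if _hx2 : x.val ≤ m then some (⟨x.val - 1, by omega⟩, false)
    else some (⟨p - x.val - 1, by have := ZMod.val_lt x; omega⟩, true)
  invFun o := match o with
    | none => 0
    | some (i, false) => ((i + 1 : ℕ) : ZMod p)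
    | some (i, true) => -((i + 1 : ℕ) : ZMod p)
  left_inv := by
    intro x
    have hlt := ZMod.val_lt x
    beta_reduce
    by_cases hx : x.val = 0
    · rw [dif_pos hx]
      have hx0 : x = 0 := by rwa [ZMod.val_eq_zero] at hx
      simp [hx0]
    · rw [dif_neg hx]
      by_cases hx2 : x.val ≤ m
      · rw [dif_pos hx2]
        show ((x.val - 1 + 1 : ℕ) : ZMod p) = x
        rw [show x.val - 1 + 1 = x.val by omega]
        exact ZMod.natCast_rightInverse x
      · rw [dif_neg hx2]
        show -((p - x.val - 1 + 1 : ℕ) : ZMod p) = x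
        rw [show p - x.val - 1 + 1 = p - x.val by omega]
        rw [Nat.cast_sub (le_of_lt hlt), ZMod.natCast_self, ZMod.natCast_rightInverse x,
          zero_sub, neg_neg]
  right_inv := by
    intro o
    match o with
    | none =>
        show (if _hx : (0 : ZMod p).val = 0 then none else _) = none
        rw [dif_pos ZMod.val_zero]
    | some (i, false) =>
        have h1 : ((i + 1 : ℕ) : ZMod p).val = i + 1 :=
          ZMod.val_cast_of_lt (by have := i.isLt; omega)
        show (if _hx : ((i + 1 : ℕ) : ZMod p).val = 0 then none else _) = _
        simp only [h1]
        rw [dif_neg (by omega), dif_pos (by have := i.isLt; omega)]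
        simp only [Option.some.injEq, Prod.mk.injEq, and_true]
        exact Fin.ext (by simp)
    | some (i, true) =>
        have hne : ((i + 1 : ℕ) : ZMod p) ≠ 0 := by
          intro h
          rw [ZMod.natCast_eq_zero_iff] at h
          have := Nat.le_of_dvd (by omega) h
          have := i.isLt
          omega
        have h1 : (-((i + 1 : ℕ) : ZMod p)).val = p - (i + 1) := by
          rw [ZMod.neg_val, if_neg hne, ZMod.val_cast_of_lt (by have := i.isLt; omega)]
        show (if _hx : (-((i + 1 : ℕ) : ZMod p)).val = 0 then none else _) = _
        simp only [h1]
        have hlt := i.isLt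
        rw [dif_neg (by omega), dif_neg (by omega)]
        simp only [Option.some.injEq, Prod.mk.injEq, and_true]
        exact Fin.ext (by simp; omega)

lemma EE_neg (hm : p = 2 * m + 1) (x : ZMod p) : EE hm (-x) = flipo (EE hm x) := by
  by_cases hx : x = 0
  · subst hx
    rw [neg_zero]
    have h0 : EE hm (0 : ZMod p) = none := by
      show (if _hx : (0 : ZMod p).val = 0 then none else _) = none
      rw [dif_pos ZMod.val_zero]
    rw [h0]
    rfl
  · have hxv : x.val ≠ 0 := by rwa [Ne, ZMod.val_eq_zero]
    have hlt := ZMod.val_lt x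
    have hnegv : (-x).val = p - x.val := by rw [ZMod.neg_val, if_neg hx]
    show (if _hx : (-x).val = 0 then none else _) = flipo (if _hx : x.val = 0 then none else _)
    by_cases hx2 : x.val ≤ m
    · rw [dif_neg (show ¬(-x).val = 0 by omega), dif_neg (show ¬(-x).val ≤ m by omega),
        dif_neg hxv, dif_pos hx2]
      simp only [flipo, Option.map_some, Bool.not_false, Option.some.injEq, Prod.mk.injEq,
        and_true, Fin.mk.injEq]
      omega
    · rw [dif_neg (show ¬(-x).val = 0 by omega), dif_pos (show (-x).val ≤ m by omega),
        dif_neg hxv, dif_neg hx2]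
      simp only [flipo, Option.map_some, Bool.not_true, Option.some.injEq, Prod.mk.injEq,
        and_true, Fin.mk.injEq]
      omega

lemma EE_symm_flipo (hm : p = 2 * m + 1) (o : Option (Fin m × Bool)) :
    (EE hm).symm (flipo o) = -((EE hm).symm o) := by
  have := EE_neg hm ((EE hm).symm o)
  rw [Equiv.apply_symm_apply] at this
  rw [← this, Equiv.symm_apply_apply]

lemma shear_flipo {m : ℕ} (g : Perm (Fin m)) (ε : Fin m → Bool) (o : Option (Fin m × Bool)) :
    (Equiv.optionCongr (shear g ε)) (flipo o) = flipo ((Equiv.optionCongr (shear g ε)) o) := by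
  match o with
  | none => rfl
  | some (a, b) =>
      simp only [flipo, Option.map_some, Equiv.optionCongr_apply, shear, Equiv.prodShear_apply]
      rcases hεa : ε a with _ | _ <;> cases b <;> simp [notE]

lemma appFalse (b : Bool) : (if b then notE else Equiv.refl Bool) false = b := by
  cases b <;> rfl

lemma appTrue (b : Bool) : (if b then notE else Equiv.refl Bool) true = !b := by
  cases b <;> rfl

def Theta (hm : p = 2 * m + 1) (g : Perm (Fin m)) (ε : Fin m → Bool) : Perm (ZMod p) :=
  (EE hm).symm.permCongr (Equiv.optionCongr (shear g ε))

lemma Theta_odd (hm : p = 2 * m + 1) (g : Perm (Fin m)) (ε : Fin m → Bool) (x : ZMod p) :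
    Theta hm g ε (-x) = -(Theta hm g ε x) := by
  simp only [Theta, Equiv.permCongr_apply, Equiv.symm_symm]
  rw [EE_neg hm x, shear_flipo, EE_symm_flipo]

lemma Theta_injective (hm : p = 2 * m + 1) :
    Function.Injective (fun gε : Perm (Fin m) × (Fin m → Bool) => Theta hm gε.1 gε.2) := by
  intro ⟨g, ε⟩ ⟨g', ε'⟩ h
  simp only [Theta] at h
  have h2 := (EE hm).symm.permCongr.injective h
  have h3 : ∀ a : Fin m, (g a, ε a) = (g' a, ε' a) := by
    intro a
    have h4 := congrArg (fun F : Perm (Option (Fin m × Bool)) => F (some (a, false))) h2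
    simp only [Equiv.optionCongr_apply, Option.map_some, shear, Equiv.prodShear_apply] at h4
    rw [appFalse, appFalse] at h4
    exact Option.some.inj h4
  simp only [Prod.mk.injEq] at h3
  have hg : g = g' := Equiv.ext fun a => (h3 a).1
  have hε : ε = ε' := funext fun a => (h3 a).2
  rw [hg, hε]

lemma Theta_surjective (hm : p = 2 * m + 1) (hp : 5 ≤ p) (f : Perm (ZMod p))
    (hf : ∀ x : ZMod p, f (-x) = -(f x)) :
    ∃ g ε, Theta hm g ε = f := by
  classical
  set G : Perm (Option (Fin m × Bool)) := (EE hm).permCongr f with hG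
  have hGapp : ∀ o, G o = EE hm (f ((EE hm).symm o)) := fun o => by
    simp [hG, Equiv.permCongr_apply]
  have hGnone : G none = none := by
    rw [hGapp]
    have h0 : (EE hm).symm none = 0 := rfl
    rw [h0, odd_apply_zero hp hf]
    show (if _hx : (0 : ZMod p).val = 0 then none else _) = none
    rw [dif_pos ZMod.val_zero]
  have hGflip : ∀ o, G (flipo o) = flipo (G o) := by
    intro o
    rw [hGapp, hGapp, EE_symm_flipo, hf, EE_neg]
  have hGsome : ∀ z : Fin m × Bool, (G (some z)).isSome := by
    intro z
    rw [Option.isSome_iff_ne_none]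
    intro h
    have := G.injective (h.trans hGnone.symm)
    exact Option.some_ne_none z this
  set g0 : Fin m → Fin m := fun a => ((G (some (a, false))).get (hGsome _)).1 with hg0
  set ε0 : Fin m → Bool := fun a => ((G (some (a, false))).get (hGsome _)).2 with hε0
  have hGval : ∀ a, G (some (a, false)) = some (g0 a, ε0 a) := by
    intro a
    exact (Option.some_get (hGsome (a, false))).symm
  have hGval' : ∀ a, G (some (a, true)) = some (g0 a, !(ε0 a)) := by
    intro a
    have : (some (a, true) : Option (Fin m × Bool)) = flipo (some (a, false)) := rfl
    rw [this, hGflip, hGval]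
    rfl
  have hg0inj : Function.Injective g0 := by
    intro a a' ha
    by_cases hε : ε0 a = ε0 a'
    · have : G (some (a, false)) = G (some (a', false)) := by
        rw [hGval, hGval, ha, hε]
      have := G.injective this
      simpa using this
    · have hεn : ε0 a' = !(ε0 a) := by
        rcases hb : ε0 a with _ | _ <;> rcases hb' : ε0 a' with _ | _ <;> simp_all
      have : G (some (a, true)) = G (some (a', false)) := by
        rw [hGval', hGval, ha, hεn]
      have := G.injective this
      simp at this
  refine ⟨Equiv.ofBijective g0 (Finite.injective_iff_bijective.mp hg0inj), ε0, ?_⟩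
  have hkey : Equiv.optionCongr (shear (Equiv.ofBijective g0
      (Finite.injective_iff_bijective.mp hg0inj)) ε0) = G := by
    ext o
    match o with
    | none => rw [hGnone]; rfl
    | some (a, false) =>
        rw [hGval]
        simp only [Equiv.optionCongr_apply, Option.map_some, shear, Equiv.prodShear_apply,
          Equiv.ofBijective_apply]
        rw [appFalse]
    | some (a, true) =>
        rw [hGval']
        simp only [Equiv.optionCongr_apply, Option.map_some, shear, Equiv.prodShear_apply,
          Equiv.ofBijective_apply]
        rw [appTrue]
  rw [Theta, hkey, hG]
  ext x
  simp [Equiv.permCongr_apply]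

end AuxD

section AuxE
variable {p m : ℕ} [NeZero p] [Fact p.Prime]

lemma card_oddPerm (hm : p = 2 * m + 1) (hp : 5 ≤ p) :
    Nat.card (OddPerm (p := p)) = 2 ^ m * m.factorial := by
  classical
  have hbij : Function.Bijective
      (fun gε : Perm (Fin m) × (Fin m → Bool) =>
        (⟨Theta hm gε.1 gε.2, Theta_odd hm gε.1 gε.2⟩ : OddPerm (p := p))) := by
    constructor
    · intro a b hab
      exact Theta_injective hm (congrArg Subtype.val hab)
    · rintro ⟨f, hf⟩
      obtain ⟨g, ε, hgε⟩ := Theta_surjective hm hp f hf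
      exact ⟨(g, ε), Subtype.ext hgε⟩
  have hcard := Nat.card_eq_of_bijective _ hbij
  have h2 : Nat.card (Perm (Fin m) × (Fin m → Bool)) = 2 ^ m * m.factorial := by
    rw [Nat.card_eq_fintype_card, Fintype.card_prod, Fintype.card_perm, Fintype.card_fun,
      Fintype.card_fin, Fintype.card_bool]
    ring
  exact hcard.symm.trans h2

end AuxE

/-- the number of rotation classes of Hamiltonian cycles with at least
one axis of reflective symmetry equals `((p-1)/2) · 2^((p-3)/2) · ((p-3)/2)!`. -/
theorem stmt5 (p : ℕ) [Fact p.Prime] (hp : 5 ≤ p) :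
    Nat.card {q : RotClasses p // ∃ σ : HC p, Quotient.mk (rotSetoid p) σ = q ∧
        ∃ s : ZMod p, FixedBy p (reflAt p s) σ.1}
      = (p - 1) / 2 * 2 ^ ((p - 3) / 2) * Nat.factorial ((p - 3) / 2) := by
  classical
  set m := (p - 1) / 2 with hmdef
  have hodd : p % 2 = 1 := (Fact.out : p.Prime).eq_two_or_odd.resolve_left (by omega)
  have hm : p = 2 * m + 1 := by omega
  haveI : Finite (HC p) := inferInstanceAs (Finite {σ : Perm (ZMod p) // IsHC p σ})
  haveI : Finite (RotClasses p) := inferInstanceAs (Finite (Quotient (rotSetoid p)))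
  set Sub := {q : RotClasses p // ∃ σ : HC p, Quotient.mk (rotSetoid p) σ = q ∧
        ∃ s : ZMod p, FixedBy p (reflAt p s) σ.1} with hSubdef
  set S := {σ : HC p // Sym0 σ.1} with hSdef
  haveI : Finite S := inferInstanceAs (Finite {σ : HC p // Sym0 σ.1})
  haveI : Fintype S := Fintype.ofFinite S
  haveI : Fintype Sub := Fintype.ofFinite Sub
  set Φ : S → Sub := fun σ => ⟨Quotient.mk (rotSetoid p) σ.1, σ.1, rfl, 0, sym0_fixedBy σ.2⟩
    with hΦdef
  -- each fiber of Φ has exactly two elements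
  have hfib : ∀ q : Sub, (Finset.univ.filter fun σ : S => Φ σ = q).card = 2 := by
    intro q
    obtain ⟨σ0, hq, s, hfix⟩ := q.2
    have h1 : σ0.1 * reflAt p s * σ0.1 = reflAt p s := fixedBy_reflAt hp σ0.2 hfix
    set c : ZMod p := -(s * (2:ZMod p)⁻¹) with hcdef
    set τ : Perm (ZMod p) := rotAct p c σ0.1 with hτdef
    have hτHC : IsHC p τ := isHC_rotAct σ0.2 c
    have hτs : Sym0 τ := sym0_rotAct_of_fixed hp h1
    set a : S := ⟨⟨τ, hτHC⟩, hτs⟩ with hadef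
    set b : S := ⟨⟨τ⁻¹, isHC_inv hτHC⟩, sym0_inv hτs⟩ with hbdef
    have hΦa : Φ a = q := by
      apply Subtype.ext
      show Quotient.mk (rotSetoid p) a.1 = q.1
      rw [← hq]
      apply Quotient.sound
      exact ⟨-c, Or.inl (rotAct_neg_cancel p c σ0.1).symm⟩
    have hΦb : Φ b = q := by
      apply Subtype.ext
      show Quotient.mk (rotSetoid p) b.1 = q.1
      rw [← hq]
      apply Quotient.sound
      refine ⟨-c, Or.inr ?_⟩
      show σ0.1 = (rotAct p (-c) τ⁻¹)⁻¹
      rw [rotAct_inv, inv_inv, rotAct_neg_cancel]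
    have hab : a ≠ b := by
      intro h
      have h2 : τ = τ⁻¹ := congrArg (fun x : S => x.1.1) h
      exact hc_ne_inv hp hτHC h2
    have hset : (Finset.univ.filter fun σ : S => Φ σ = q) = {a, b} := by
      ext τ'
      simp only [Finset.mem_filter, Finset.mem_univ, true_and, Finset.mem_insert,
        Finset.mem_singleton]
      constructor
      · intro hΦ
        have hmk : Quotient.mk (rotSetoid p) a.1 = Quotient.mk (rotSetoid p) τ'.1 := by
          have e1 : Φ a = Φ τ' := by rw [hΦa, hΦ]
          exact congrArg Subtype.val e1
        obtain ⟨r, hr⟩ := Quotient.exact hmk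
        have := mem_pair_of_rel hp hτHC hτs τ'.2 hr
        rcases this with h | h
        · left; apply Subtype.ext; apply Subtype.ext; exact h
        · right; apply Subtype.ext; apply Subtype.ext; exact h
      · rintro (rfl | rfl)
        · exact hΦa
        · exact hΦb
    rw [hset, Finset.card_insert_of_notMem (by simpa using hab), Finset.card_singleton]
  have hcount : Fintype.card S = Fintype.card Sub * 2 := by
    rw [← Finset.card_univ,
      Finset.card_eq_sum_card_fiberwise (fun σ _ => Finset.mem_univ (Φ σ))]
    rw [Finset.sum_congr rfl (fun q _ => hfib q), Finset.sum_const, Finset.card_univ,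
      smul_eq_mul]
  -- S has the same cardinality as OddPerm
  have hSO : Nat.card (OddPerm (p := p)) = Nat.card S := by
    apply Nat.card_eq_of_bijective
      (fun f : OddPerm (p := p) =>
        (⟨⟨f.1 * rot p 1 * f.1⁻¹, (psi_mem hp f.2).1⟩, (psi_mem hp f.2).2⟩ : S))
    constructor
    · intro f g hfg
      apply Subtype.ext
      have h2 : f.1 * rot p 1 * f.1⁻¹ = g.1 * rot p 1 * g.1⁻¹ := by
        have := congrArg (fun x : S => x.1.1) hfg
        exact this
      exact psi_injective hp f.2 g.2 h2
    · intro σ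
      obtain ⟨f, hf, heq⟩ := psi_surjective hp σ.1.2 σ.2
      refine ⟨⟨f, hf⟩, ?_⟩
      apply Subtype.ext
      apply Subtype.ext
      exact heq
  have hOcard : Nat.card (OddPerm (p := p)) = 2 ^ m * m.factorial := card_oddPerm hm hp
  have hfinal : Nat.card Sub * 2 = 2 ^ m * m.factorial := by
    rw [← hOcard, hSO, Nat.card_eq_fintype_card, Nat.card_eq_fintype_card, ← hcount]
  have hm2 : 2 ≤ m := by omega
  have e1 : (p - 1) / 2 = m := hmdef.symm
  have e2 : (p - 3) / 2 = m - 1 := by omega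
  have e3 : m.factorial = m * (m-1).factorial := by
    conv_lhs => rw [show m = (m-1) + 1 by omega]
    rw [Nat.factorial_succ]
    congr 1
    omega
  have e4 : (2:ℕ) ^ m = 2 ^ (m - 1) * 2 := by
    conv_lhs => rw [show m = (m-1) + 1 by omega]
    rw [pow_succ]
  show Nat.card Sub = (p - 1) / 2 * 2 ^ ((p - 3) / 2) * Nat.factorial ((p - 3) / 2)
  rw [e1, e2]
  apply Nat.eq_of_mul_eq_mul_right (show 0 < 2 by norm_num)
  rw [hfinal, e3, e4]
  ring
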